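/- Given three mutually externally tangent circles in the plane, their three pairwise points of tangency lie on a common circle, namely the incircle of the triangle formed by the three centers. -/

import Mathlib

open RealInnerProductSpace

lemma norm_combo_sq {V : Type*} [NormedAddCommGroup V] [InnerProductSpace ℝ V]
    (a b : V) (c1 c2 : ℝ) :
    ‖c1 • a + c2 • b‖ ^ 2 =
      c1 ^ 2 * ⟪a, a⟫ + 2 * (c1 * c2) * ⟪a, b⟫ + c2 ^ 2 * ⟪b, b⟫ := by
  rw [← real_inner_self_eq_norm_sq]
  simp [inner_add_add_self, real_inner_smul_left, real_inner_smul_right,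
    real_inner_comm a b, -inner_self_eq_norm_sq_to_K]
  ring

set_option maxHeartbeats 1000000 in
theorem tangency_points_of_three_tangent_circles_concyclic
    (O : Fin 3 → EuclideanSpace ℝ (Fin 2)) (r : Fin 3 → ℝ)
    (hr : ∀ i, 0 < r i)
    (htan : ∀ i j, i ≠ j → dist (O i) (O j) = r i + r j)
    (t : Fin 3 → Fin 3 → EuclideanSpace ℝ (Fin 2))
    (ht : ∀ i j, t i j = AffineMap.lineMap (O i) (O j) (r i / (r i + r j)))
    (incenter : EuclideanSpace ℝ (Fin 2))
    (hinc : incenter = (2 * (r 0 + r 1 + r 2))⁻¹ •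
      ((r 1 + r 2) • O 0 + (r 0 + r 2) • O 1 + (r 0 + r 1) • O 2)) :
    ∃ ρ : ℝ, dist incenter (t 0 1) = ρ ∧ dist incenter (t 1 2) = ρ ∧
      dist incenter (t 0 2) = ρ := by
  have h0 := hr 0; have h1 := hr 1; have h2 := hr 2
  set a : EuclideanSpace ℝ (Fin 2) := O 1 - O 0 with ha
  set b : EuclideanSpace ℝ (Fin 2) := O 2 - O 0 with hb
  have hs : (0:ℝ) < r 0 + r 1 + r 2 := by linarith
  have hA : ⟪a, a⟫ = (r 0 + r 1) ^ 2 := by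
    rw [real_inner_self_eq_norm_sq, ha, ← dist_eq_norm, dist_comm,
      htan 0 1 (by decide)]
  have hB : ⟪b, b⟫ = (r 0 + r 2) ^ 2 := by
    rw [real_inner_self_eq_norm_sq, hb, ← dist_eq_norm, dist_comm,
      htan 0 2 (by decide)]
  have hab : ‖a - b‖ ^ 2 = (r 1 + r 2) ^ 2 := by
    have : a - b = O 1 - O 2 := by rw [ha, hb]; abel
    rw [this, ← dist_eq_norm, htan 1 2 (by decide)]
  have hC : ⟪a, b⟫ = r 0 ^ 2 + r 0 * r 1 + r 0 * r 2 - r 1 * r 2 := by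
    have h := hab
    rw [← real_inner_self_eq_norm_sq, inner_sub_sub_self, hA, hB] at h
    have hc := real_inner_comm a b
    linarith
  -- express the three difference vectors as combinations of a, b
  have S := 2 * (r 0 + r 1 + r 2)
  have e01 : incenter - t 0 1 =
      ((r 0 + r 2) / (2 * (r 0 + r 1 + r 2)) - r 0 / (r 0 + r 1)) • a +
      ((r 0 + r 1) / (2 * (r 0 + r 1 + r 2))) • b := by
    rw [hinc, ht, AffineMap.lineMap_apply, ha, hb]
    simp only [vsub_eq_sub, vadd_eq_add]
    match_scalars <;> field_simp <;> ring
  have e12 : incenter - t 1 2 =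
      ((r 0 + r 2) / (2 * (r 0 + r 1 + r 2)) - 1 + r 1 / (r 1 + r 2)) • a +
      ((r 0 + r 1) / (2 * (r 0 + r 1 + r 2)) - r 1 / (r 1 + r 2)) • b := by
    rw [hinc, ht, AffineMap.lineMap_apply, ha, hb]
    simp only [vsub_eq_sub, vadd_eq_add]
    match_scalars <;> field_simp <;> ring
  have e02 : incenter - t 0 2 =
      ((r 0 + r 2) / (2 * (r 0 + r 1 + r 2))) • a +
      ((r 0 + r 1) / (2 * (r 0 + r 1 + r 2)) - r 0 / (r 0 + r 2)) • b := by
    rw [hinc, ht, AffineMap.lineMap_apply, ha, hb]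
    simp only [vsub_eq_sub, vadd_eq_add]
    match_scalars <;> field_simp <;> ring
  have hρ2 : (0:ℝ) ≤ r 0 * r 1 * r 2 / (r 0 + r 1 + r 2) := by positivity
  have hne1 : r 0 + r 1 ≠ 0 := by positivity
  have hne2 : r 1 + r 2 ≠ 0 := by positivity
  have hne3 : r 0 + r 2 ≠ 0 := by positivity
  have hneS : r 0 + r 1 + r 2 ≠ 0 := ne_of_gt hs
  refine ⟨Real.sqrt (r 0 * r 1 * r 2 / (r 0 + r 1 + r 2)), ?_, ?_, ?_⟩ <;>
  · rw [dist_eq_norm, ← Real.sqrt_sq (norm_nonneg _)]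
    congr 1
    first | rw [e01] | rw [e12] | rw [e02]
    rw [norm_combo_sq, hA, hB, hC]
    field_simp
    ring
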